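/- Let n ≥ 1 and σ > 0; set γ₊ = [[−σ·Iₙ, 0], [0, 1]] and γ₋ = [[σ·Iₙ, 0], [0, 1]] (so γ₋ is positive definite). Suppose a ∈ GL(n+1, ℝ) satisfies aᵀ γ₊ a = λ·γ₊ with λ > 0, and set p = (1/λ)·γ₋⁻¹ aᵀ γ₋ a. Then: (a) p is self-adjoint and positive definite with respect to the inner product ⟨x, y⟩₋ = xᵀ γ₋ y, so it has a unique ⟨·,·⟩₋-self-adjoint positive-definite logarithm log p; (b) setting Z = (1/2)·log p, one has Z ∈ 𝔭_σ; and (c) k = λ^{−1/2}·a·exp(−Z) lies in K. -/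

import Mathlib

open Matrix

noncomputable section

abbrev Idx (n : ℕ) := Fin n ⊕ Unit

/-- K = { [[R,0],[0,ε]] : R ∈ O(n), ε = ±1 } -/
def Kset (n : ℕ) : Set (Matrix (Idx n) (Idx n) ℝ) :=
  { m | ∃ (R : Matrix (Fin n) (Fin n) ℝ) (ε : ℝ),
      Rᵀ * R = 1 ∧ (ε = 1 ∨ ε = -1) ∧
      m = fromBlocks R 0 0 (ε • (1 : Matrix Unit Unit ℝ)) }

/-- 𝔭_σ -/
def pSet (n : ℕ) (σ : ℝ) : Set (Matrix (Idx n) (Idx n) ℝ) :=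
  { m | ∃ b : Fin n → ℝ,
      m = fromBlocks 0 (replicateCol Unit b) (σ • replicateRow Unit b) 0 }

/-- γ₊ = [[−σ·Iₙ, 0], [0, 1]] -/
def gammaPlus (n : ℕ) (σ : ℝ) : Matrix (Idx n) (Idx n) ℝ :=
  fromBlocks ((-σ) • (1 : Matrix (Fin n) (Fin n) ℝ)) 0 0 (1 : Matrix Unit Unit ℝ)

/-- γ₋ = [[σ·Iₙ, 0], [0, 1]] -/
def gammaMinus (n : ℕ) (σ : ℝ) : Matrix (Idx n) (Idx n) ℝ :=
  fromBlocks (σ • (1 : Matrix (Fin n) (Fin n) ℝ)) 0 0 (1 : Matrix Unit Unit ℝ)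

/-- self-adjointness with respect to the inner product ⟨x,y⟩₋ = xᵀ γ₋ y -/
def SelfAdjNeg (n : ℕ) (σ : ℝ) (M : Matrix (Idx n) (Idx n) ℝ) : Prop :=
  gammaMinus n σ * M = Mᵀ * gammaMinus n σ

/-- positive definiteness with respect to the inner product ⟨x,y⟩₋ = xᵀ γ₋ y -/
def PosDefNeg (n : ℕ) (σ : ℝ) (M : Matrix (Idx n) (Idx n) ℝ) : Prop :=
  ∀ x : Idx n → ℝ, x ≠ 0 → 0 < x ⬝ᵥ ((gammaMinus n σ * M) *ᵥ x)


open NormedSpace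
namespace Stmt14Aux

variable {n : ℕ}

lemma gm_mul (n : ℕ) (α β : ℝ) :
    gammaMinus n α * gammaMinus n β = gammaMinus n (α * β) := by
  simp [gammaMinus, fromBlocks_multiply, smul_smul, mul_comm α β]

lemma gm_one (n : ℕ) : gammaMinus n 1 = 1 := by
  simp [gammaMinus, fromBlocks_one]

lemma gm_transpose (n : ℕ) (α : ℝ) : (gammaMinus n α)ᵀ = gammaMinus n α := by
  simp [gammaMinus, fromBlocks_transpose]

def gmUnit (n : ℕ) {α : ℝ} (hα : α ≠ 0) : (Matrix (Idx n) (Idx n) ℝ)ˣ :=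
  ⟨gammaMinus n α, gammaMinus n α⁻¹,
    by rw [gm_mul, mul_inv_cancel₀ hα, gm_one],
    by rw [gm_mul, inv_mul_cancel₀ hα, gm_one]⟩

lemma gm_inv (n : ℕ) {α : ℝ} (hα : α ≠ 0) :
    (gammaMinus n α)⁻¹ = gammaMinus n α⁻¹ :=
  Matrix.inv_eq_right_inv (by rw [gm_mul, mul_inv_cancel₀ hα, gm_one])

def Jmat (n : ℕ) : Matrix (Idx n) (Idx n) ℝ :=
  fromBlocks (-1) 0 0 1

lemma J_mul_J (n : ℕ) : Jmat n * Jmat n = 1 := by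
  simp [Jmat, fromBlocks_multiply, fromBlocks_one]

lemma Jmat_transpose (n : ℕ) : (Jmat n)ᵀ = Jmat n := by
  simp [Jmat, fromBlocks_transpose]

def JUnit (n : ℕ) : (Matrix (Idx n) (Idx n) ℝ)ˣ :=
  ⟨Jmat n, Jmat n, J_mul_J n, J_mul_J n⟩

lemma gp_eq_gm_J (n : ℕ) (σ : ℝ) : gammaPlus n σ = gammaMinus n σ * Jmat n := by
  simp [gammaPlus, gammaMinus, Jmat, fromBlocks_multiply]

lemma gm_J_comm (n : ℕ) (σ : ℝ) :
    gammaMinus n σ * Jmat n = Jmat n * gammaMinus n σ := by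
  simp [gammaMinus, Jmat, fromBlocks_multiply]

lemma gp_eq_J_gm (n : ℕ) (σ : ℝ) : gammaPlus n σ = Jmat n * gammaMinus n σ := by
  rw [gp_eq_gm_J, gm_J_comm]

lemma gp_mul (n : ℕ) (α β : ℝ) :
    gammaPlus n α * gammaPlus n β = gammaMinus n (α * β) := by
  simp [gammaPlus, gammaMinus, fromBlocks_multiply, smul_smul, mul_comm α β]

def gpUnit (n : ℕ) {α : ℝ} (hα : α ≠ 0) : (Matrix (Idx n) (Idx n) ℝ)ˣ :=
  ⟨gammaPlus n α, gammaPlus n α⁻¹,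
    by rw [gp_mul, mul_inv_cancel₀ hα, gm_one],
    by rw [gp_mul, inv_mul_cancel₀ hα, gm_one]⟩

lemma isSelfAdjoint_iff_transpose {m : Type*} [Fintype m] [DecidableEq m]
    (X : Matrix m m ℝ) : IsSelfAdjoint X ↔ Xᵀ = X := by
  rw [isSelfAdjoint_iff, Matrix.star_eq_conjTranspose, conjTranspose_eq_transpose_of_trivial]

lemma sandwich {m : Type*} [Fintype m] [DecidableEq m] (g gi M : Matrix m m ℝ)
    (h1 : gi * g = 1) : gi * (g * M * gi) * g = M := by
  calc gi * (g * M * gi) * g = (gi * g) * M * (gi * g) := by noncomm_ring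
  _ = M := by rw [h1, one_mul, mul_one]

variable {n : ℕ} {σ : ℝ}

lemma hss (hσ : 0 < σ) :
    gammaMinus n (Real.sqrt σ) * gammaMinus n (Real.sqrt σ) = gammaMinus n σ := by
  rw [gm_mul, Real.mul_self_sqrt hσ.le]

lemma hgig (hσ : 0 < σ) :
    gammaMinus n (Real.sqrt σ)⁻¹ * gammaMinus n (Real.sqrt σ) = 1 := by
  rw [gm_mul, inv_mul_cancel₀ (ne_of_gt (Real.sqrt_pos.mpr hσ)), gm_one]

lemma hggi (hσ : 0 < σ) :
    gammaMinus n (Real.sqrt σ) * gammaMinus n (Real.sqrt σ)⁻¹ = 1 := by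
  rw [gm_mul, mul_inv_cancel₀ (ne_of_gt (Real.sqrt_pos.mpr hσ)), gm_one]

/-- conjugating a `SelfAdjNeg` matrix gives a self-adjoint one -/
lemma selfAdjNeg_conj (hσ : 0 < σ) {M : Matrix (Idx n) (Idx n) ℝ} (h : SelfAdjNeg n σ M) :
    IsSelfAdjoint (gammaMinus n (Real.sqrt σ) * M * gammaMinus n (Real.sqrt σ)⁻¹) := by
  set g := gammaMinus n (Real.sqrt σ) with hg
  set gi := gammaMinus n (Real.sqrt σ)⁻¹ with hgi
  have hT : (g * M * gi)ᵀ = gi * Mᵀ * g := by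
    rw [Matrix.transpose_mul, Matrix.transpose_mul, hg, hgi, gm_transpose, gm_transpose,
      mul_assoc]
  have h' : g * g * M = Mᵀ * (g * g) := by rw [hss hσ]; exact h
  have hgg : (gi * gi) * (g * g) = 1 := by
    have e : (gi * gi) * (g * g) = gi * ((gi * g) * g) := by noncomm_ring
    rw [e, hgig hσ, one_mul, hgig hσ]
  have hM : M = (gi * gi) * (Mᵀ * (g * g)) := by
    calc M = ((gi * gi) * (g * g)) * M := by rw [hgg, one_mul]
    _ = (gi * gi) * (g * g * M) := by noncomm_ring
    _ = (gi * gi) * (Mᵀ * (g * g)) := by rw [h']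
  rw [isSelfAdjoint_iff_transpose, hT]
  conv_rhs => rw [hM]
  have e : g * ((gi * gi) * (Mᵀ * (g * g))) * gi = (g * gi) * (gi * Mᵀ * g) * (g * gi) := by
    noncomm_ring
  rw [e, hggi hσ, one_mul, mul_one]

/-- unconjugating a self-adjoint matrix gives a `SelfAdjNeg` one -/
lemma selfAdjNeg_unconj (hσ : 0 < σ) {X : Matrix (Idx n) (Idx n) ℝ} (h : IsSelfAdjoint X) :
    SelfAdjNeg n σ (gammaMinus n (Real.sqrt σ)⁻¹ * X * gammaMinus n (Real.sqrt σ)) := by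
  set g := gammaMinus n (Real.sqrt σ) with hg
  set gi := gammaMinus n (Real.sqrt σ)⁻¹ with hgi
  have hX : Xᵀ = X := (isSelfAdjoint_iff_transpose X).mp h
  have hT : (gi * X * g)ᵀ = g * Xᵀ * gi := by
    rw [Matrix.transpose_mul, Matrix.transpose_mul, hg, hgi, gm_transpose, gm_transpose,
      mul_assoc]
  unfold SelfAdjNeg
  rw [← hss hσ, hT, hX]
  have e1 : g * g * (gi * X * g) = (g * (g * gi)) * (X * g) := by noncomm_ring
  have e2 : g * X * gi * (g * g) = (g * X) * ((gi * g) * g) := by noncomm_ring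
  rw [e1, e2, hggi hσ, hgig hσ, mul_one, one_mul, mul_assoc]

open scoped Matrix.Norms.L2Operator MatrixOrder

/-- injectivity of exp on selfadjoint real matrices -/
lemma exp_inj_selfAdjoint {m : Type*} [Fintype m] [DecidableEq m]
    {A B : Matrix m m ℝ} (hA : IsSelfAdjoint A) (hB : IsSelfAdjoint B)
    (h : NormedSpace.exp A = NormedSpace.exp B) : A = B := by
  rw [← CFC.log_exp A hA, ← CFC.log_exp B hB, h]

/-- injectivity of exp on `SelfAdjNeg` matrices -/
lemma exp_inj_selfAdjNeg (hσ : 0 < σ) {L₁ L₂ : Matrix (Idx n) (Idx n) ℝ}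
    (h1 : SelfAdjNeg n σ L₁) (h2 : SelfAdjNeg n σ L₂)
    (h : NormedSpace.exp L₁ = NormedSpace.exp L₂) : L₁ = L₂ := by
  set g := gammaMinus n (Real.sqrt σ) with hg
  set gi := gammaMinus n (Real.sqrt σ)⁻¹ with hgi
  have hu : (gmUnit n (ne_of_gt (Real.sqrt_pos.mpr hσ)) : Matrix (Idx n) (Idx n) ℝ) = g := rfl
  have hu' : ((gmUnit n (ne_of_gt (Real.sqrt_pos.mpr hσ)))⁻¹ : (Matrix (Idx n) (Idx n) ℝ)ˣ)
      = (gi : Matrix (Idx n) (Idx n) ℝ) := rfl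
  have key : ∀ L : Matrix (Idx n) (Idx n) ℝ,
      NormedSpace.exp (g * L * gi) = g * NormedSpace.exp L * gi := by
    intro L
    have := Matrix.exp_units_conj (gmUnit n (ne_of_gt (Real.sqrt_pos.mpr hσ))) L
    rwa [hu, hu'] at this
  have e : g * L₁ * gi = g * L₂ * gi := by
    apply exp_inj_selfAdjoint (selfAdjNeg_conj hσ h1) (selfAdjNeg_conj hσ h2)
    rw [key, key, h]
  have := congrArg (fun X => gi * X * g) e
  rw [← sandwich g gi L₁ (hgig hσ), ← sandwich g gi L₂ (hgig hσ)]
  exact this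

/-- dot product trick: x ⬝ᵥ ((g * Q * g) *ᵥ x) = (g *ᵥ x) ⬝ᵥ (Q *ᵥ (g *ᵥ x)) for symmetric g -/
lemma dot_conj {m : Type*} [Fintype m] [DecidableEq m] (g Q : Matrix m m ℝ)
    (hgT : gᵀ = g) (x : m → ℝ) :
    x ⬝ᵥ ((g * Q * g) *ᵥ x) = (g *ᵥ x) ⬝ᵥ (Q *ᵥ (g *ᵥ x)) := by
  rw [mul_assoc, ← Matrix.mulVec_mulVec, Matrix.dotProduct_mulVec, ← Matrix.mulVec_mulVec]
  congr 1
  conv_lhs => rw [← hgT]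
  exact Matrix.vecMul_transpose g x

lemma mulVec_ne_zero {m : Type*} [Fintype m] [DecidableEq m] (g gi : Matrix m m ℝ)
    (hgig : gi * g = 1) {x : m → ℝ} (hx : x ≠ 0) : g *ᵥ x ≠ 0 := by
  intro h0
  apply hx
  have : gi *ᵥ (g *ᵥ x) = x := by
    rw [Matrix.mulVec_mulVec, hgig, Matrix.one_mulVec]
  rw [h0, Matrix.mulVec_zero] at this
  exact this.symm

lemma dotProduct_self_pos {m : Type*} [Fintype m] {v : m → ℝ} (hv : v ≠ 0) :
    0 < v ⬝ᵥ v := by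
  rcases lt_or_eq_of_le (Finset.sum_nonneg fun i _ => mul_self_nonneg (v i)) with h | h
  · exact h
  · exact absurd (dotProduct_self_eq_zero.mp h.symm) hv

/-- existence of a `SelfAdjNeg` logarithm -/
lemma exists_selfAdjNeg_log (hσ : 0 < σ) {p : Matrix (Idx n) (Idx n) ℝ}
    (h1 : SelfAdjNeg n σ p) (h2 : PosDefNeg n σ p) :
    ∃ L : Matrix (Idx n) (Idx n) ℝ, SelfAdjNeg n σ L ∧ NormedSpace.exp L = p := by
  set g := gammaMinus n (Real.sqrt σ) with hg
  set gi := gammaMinus n (Real.sqrt σ)⁻¹ with hgi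
  set q := g * p * gi with hq
  have hqsa : IsSelfAdjoint q := selfAdjNeg_conj hσ h1
  have hqpd : q.PosDef := by
    refine Matrix.PosDef.of_dotProduct_mulVec_pos hqsa fun x hx => ?_
    have hy : (gi *ᵥ x) ≠ 0 := mulVec_ne_zero gi g (hggi hσ) hx
    have := h2 (gi *ᵥ x) hy
    have e1 : gammaMinus n σ * p = g * q * g := by
      calc gammaMinus n σ * p = (g * g) * p := by rw [hss hσ]
      _ = g * (g * p * (gi * g)) := by rw [hgig hσ]; noncomm_ring
      _ = g * q * g := by rw [hq]; noncomm_ring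
    rw [e1, dot_conj g q (by rw [hg, gm_transpose]) (gi *ᵥ x)] at this
    have e2 : g *ᵥ (gi *ᵥ x) = x := by
      rw [Matrix.mulVec_mulVec, hggi hσ, Matrix.one_mulVec]
    rw [e2] at this
    simpa using this
  have hspec : ∀ t ∈ spectrum ℝ q, 0 < t := by
    intro t ht
    rw [Matrix.IsHermitian.spectrum_real_eq_range_eigenvalues hqsa] at ht
    obtain ⟨i, rfl⟩ := ht
    exact hqpd.eigenvalues_pos i
  refine ⟨gi * CFC.log q * g, selfAdjNeg_unconj hσ IsSelfAdjoint.log, ?_⟩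
  have hu' : ((gmUnit n (ne_of_gt (Real.sqrt_pos.mpr hσ)))⁻¹ : (Matrix (Idx n) (Idx n) ℝ)ˣ)
      = (gi : Matrix (Idx n) (Idx n) ℝ) := rfl
  have key := Matrix.exp_units_conj' (gmUnit n (ne_of_gt (Real.sqrt_pos.mpr hσ))) (CFC.log q)
  rw [show ((gmUnit n (ne_of_gt (Real.sqrt_pos.mpr hσ))) : Matrix (Idx n) (Idx n) ℝ) = g from rfl,
    hu'] at key
  rw [key, CFC.exp_log q hqpd.isStrictlyPositive]
  exact sandwich g gi p (hgig hσ)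

lemma gm_eq_gp_J (n : ℕ) (σ : ℝ) : gammaMinus n σ = gammaPlus n σ * Jmat n := by
  rw [gp_eq_gm_J, mul_assoc, J_mul_J, mul_one]

lemma JJcancel (n : ℕ) (x : Matrix (Idx n) (Idx n) ℝ) : Jmat n * (Jmat n * x) = x := by
  rw [← mul_assoc, J_mul_J, one_mul]

set_option maxHeartbeats 2000000 in
lemma p_eq (hσ : 0 < σ) (a : (Matrix (Idx n) (Idx n) ℝ)ˣ) {l : ℝ} (hl : 0 < l)
    (ha : (a : Matrix (Idx n) (Idx n) ℝ)ᵀ * gammaPlus n σ * (a : Matrix (Idx n) (Idx n) ℝ)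
      = l • gammaPlus n σ) :
    (1 / l) • ((gammaMinus n σ)⁻¹ * (a : Matrix (Idx n) (Idx n) ℝ)ᵀ * gammaMinus n σ *
      (a : Matrix (Idx n) (Idx n) ℝ))
    = Jmat n * ((↑a⁻¹ : Matrix (Idx n) (Idx n) ℝ) *
        (Jmat n * (a : Matrix (Idx n) (Idx n) ℝ))) := by
  set A : Matrix (Idx n) (Idx n) ℝ := (a : Matrix (Idx n) (Idx n) ℝ) with hA
  set Ai : Matrix (Idx n) (Idx n) ℝ := (↑a⁻¹ : Matrix (Idx n) (Idx n) ℝ) with hAi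
  have h1 : Aᵀ * gammaPlus n σ = l • (gammaPlus n σ * Ai) := by
    have h := congrArg (fun X => X * Ai) ha
    rw [mul_assoc, (show A * Ai = 1 from a.mul_inv), mul_one, smul_mul_assoc] at h
    exact h
  have h2 : gammaMinus n σ⁻¹ * gammaPlus n σ = Jmat n := by
    rw [gp_eq_gm_J, ← mul_assoc, gm_mul, inv_mul_cancel₀ (ne_of_gt hσ), gm_one, one_mul]
  rw [gm_inv n (ne_of_gt hσ)]
  calc (1/l) • (gammaMinus n σ⁻¹ * Aᵀ * gammaMinus n σ * A)
      = (1/l) • (gammaMinus n σ⁻¹ * (Aᵀ * gammaPlus n σ) * (Jmat n * A)) := by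
        rw [gp_eq_gm_J]
        congr 1
        rw [show gammaMinus n σ⁻¹ * (Aᵀ * (gammaMinus n σ * Jmat n)) * (Jmat n * A)
            = gammaMinus n σ⁻¹ * Aᵀ * gammaMinus n σ * ((Jmat n * Jmat n) * A) from by
              noncomm_ring,
          J_mul_J, one_mul]
  _ = (1/l) • (l • (gammaMinus n σ⁻¹ * (gammaPlus n σ * Ai) * (Jmat n * A))) := by
        rw [h1, mul_smul_comm, smul_mul_assoc]
  _ = gammaMinus n σ⁻¹ * (gammaPlus n σ * Ai) * (Jmat n * A) := by
        rw [smul_smul, one_div, inv_mul_cancel₀ (ne_of_gt hl), one_smul]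
  _ = (gammaMinus n σ⁻¹ * gammaPlus n σ) * (Ai * (Jmat n * A)) := by noncomm_ring
  _ = Jmat n * (Ai * (Jmat n * A)) := by rw [h2]

lemma pJpJ (a : (Matrix (Idx n) (Idx n) ℝ)ˣ) :
    (Jmat n * ((↑a⁻¹ : Matrix (Idx n) (Idx n) ℝ) * (Jmat n * (a : Matrix (Idx n) (Idx n) ℝ)))) *
      (Jmat n * ((Jmat n * ((↑a⁻¹ : Matrix (Idx n) (Idx n) ℝ) *
        (Jmat n * (a : Matrix (Idx n) (Idx n) ℝ)))) * Jmat n)) = 1 := by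
  simp only [mul_assoc, JJcancel, Units.inv_mul_cancel_left, Units.mul_inv_cancel_left,
    J_mul_J, mul_one]

lemma eq_zero_of_eq_neg {M : Type*} [AddCommGroup M] [Module ℝ M] {x : M} (h : x = -x) :
    x = 0 := by
  have h2 : (2 : ℝ) • x = 0 := by
    rw [two_smul]
    nth_rewrite 1 [h]
    exact neg_add_cancel x
  simpa using (smul_eq_zero.mp h2).resolve_left (by norm_num)

lemma DtoEps (D : Matrix Unit Unit ℝ) (h : Dᵀ * D = 1) :
    ∃ ε : ℝ, (ε = 1 ∨ ε = -1) ∧ D = ε • (1 : Matrix Unit Unit ℝ) := by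
  have h1 : D () () * D () () = 1 := by
    have := congrFun (congrFun h ()) ()
    simpa [Matrix.mul_apply] using this
  refine ⟨D () (), mul_self_eq_one_iff.mp h1, ?_⟩
  ext i j
  cases i; cases j
  simp

lemma mem_Kset (hσ : 0 < σ) (m : Matrix (Idx n) (Idx n) ℝ)
    (h1 : mᵀ * gammaMinus n σ * m = gammaMinus n σ)
    (h2 : mᵀ * gammaPlus n σ * m = gammaPlus n σ) :
    m ∈ Kset n := by
  obtain ⟨R, B, C, D, hm⟩ : ∃ R B C D, m = fromBlocks R B C D :=
    ⟨m.toBlocks₁₁, m.toBlocks₁₂, m.toBlocks₂₁, m.toBlocks₂₂, (fromBlocks_toBlocks m).symm⟩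
  rw [hm, gammaMinus, fromBlocks_transpose, fromBlocks_multiply, fromBlocks_multiply] at h1
  rw [hm, gammaPlus, fromBlocks_transpose, fromBlocks_multiply, fromBlocks_multiply] at h2
  simp only [Matrix.mul_zero, Matrix.zero_mul, add_zero, zero_add, Matrix.mul_one,
    Matrix.one_mul, Matrix.mul_smul, Matrix.smul_mul] at h1 h2
  obtain ⟨e11, e12, e21, e22⟩ := fromBlocks_inj.mp h1
  obtain ⟨f11, f12, f21, f22⟩ := fromBlocks_inj.mp h2
  -- Rᵀ * R = 1
  have hR : Rᵀ * R = 1 := by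
    apply smul_right_injective (Matrix (Fin n) (Fin n) ℝ)
      (show (2 * σ : ℝ) ≠ 0 by positivity)
    calc (2 * σ : ℝ) • (Rᵀ * R)
        = (σ • (Rᵀ * R) + Cᵀ * C) - ((-σ) • (Rᵀ * R) + Cᵀ * C) := by module
    _ = σ • (1 : Matrix (Fin n) (Fin n) ℝ) - (-σ) • (1 : Matrix (Fin n) (Fin n) ℝ) := by
        rw [e11, f11]
    _ = (2 * σ : ℝ) • (1 : Matrix (Fin n) (Fin n) ℝ) := by module
  have hC : C = 0 := by
    have hCC : Cᵀ * C = 0 := by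
      have := e11
      rw [hR] at this
      calc Cᵀ * C = (σ • (1 : Matrix (Fin n) (Fin n) ℝ) + Cᵀ * C)
          - σ • (1 : Matrix (Fin n) (Fin n) ℝ) := by module
      _ = 0 := by rw [this]; module
    have : Cᴴ * C = 0 := by rwa [conjTranspose_eq_transpose_of_trivial]
    exact Matrix.conjTranspose_mul_self_eq_zero.mp this
  have hB : B = 0 := by
    have hBB : Bᵀ * B = 0 := by
      apply smul_right_injective (Matrix Unit Unit ℝ) (show (2 * σ : ℝ) ≠ 0 by positivity)
      calc (2 * σ : ℝ) • (Bᵀ * B)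
          = (σ • (Bᵀ * B) + Dᵀ * D) - ((-σ) • (Bᵀ * B) + Dᵀ * D) := by module
      _ = (1 : Matrix Unit Unit ℝ) - (1 : Matrix Unit Unit ℝ) := by rw [e22, f22]
      _ = (2 * σ : ℝ) • (0 : Matrix Unit Unit ℝ) := by module
    have : Bᴴ * B = 0 := by rwa [conjTranspose_eq_transpose_of_trivial]
    exact Matrix.conjTranspose_mul_self_eq_zero.mp this
  have hD : Dᵀ * D = 1 := by
    have := e22
    rw [hB] at this
    simpa using this
  obtain ⟨ε, hε, hDe⟩ := DtoEps D hD
  exact ⟨R, ε, hR, hε, by rw [hm, hC, hB, hDe]⟩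

lemma JL_anticomm {L : Matrix (Idx n) (Idx n) ℝ} (hJ : Jmat n * L * Jmat n = -L) :
    Jmat n * L = -(L * Jmat n) := by
  have h := congrArg (fun X => X * Jmat n) hJ
  rwa [mul_assoc (Jmat n * L), J_mul_J, mul_one, neg_mul] at h

lemma gp_anti {L : Matrix (Idx n) (Idx n) ℝ} (hsa : SelfAdjNeg n σ L)
    (hJ : Jmat n * L * Jmat n = -L) :
    gammaPlus n σ * L = -(Lᵀ * gammaPlus n σ) := by
  have h4 : L * Jmat n = -(Jmat n * L) := by rw [JL_anticomm hJ, neg_neg]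
  have e : Lᵀ * gammaPlus n σ = -(gammaPlus n σ * L) := by
    calc Lᵀ * gammaPlus n σ
        = Lᵀ * (gammaMinus n σ * Jmat n) := by rw [gp_eq_gm_J]
    _ = (Lᵀ * gammaMinus n σ) * Jmat n := (mul_assoc _ _ _).symm
    _ = (gammaMinus n σ * L) * Jmat n := by rw [← hsa]
    _ = gammaMinus n σ * (L * Jmat n) := mul_assoc _ _ _
    _ = gammaMinus n σ * (-(Jmat n * L)) := by rw [h4]
    _ = -(gammaMinus n σ * (Jmat n * L)) := by rw [mul_neg]
    _ = -((gammaMinus n σ * Jmat n) * L) := by rw [mul_assoc]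
    _ = -(gammaPlus n σ * L) := by rw [← gp_eq_gm_J]
  rw [e, neg_neg]

lemma half_mem_pSet {L : Matrix (Idx n) (Idx n) ℝ} (hsa : SelfAdjNeg n σ L)
    (hJ : Jmat n * L * Jmat n = -L) :
    ((1 / 2 : ℝ) • L) ∈ pSet n σ := by
  obtain ⟨A, B, C, D, hm⟩ : ∃ A B C D, L = fromBlocks A B C D :=
    ⟨L.toBlocks₁₁, L.toBlocks₁₂, L.toBlocks₂₁, L.toBlocks₂₂, (fromBlocks_toBlocks L).symm⟩
  rw [hm] at hJ
  rw [Jmat, fromBlocks_multiply, fromBlocks_multiply, fromBlocks_neg] at hJ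
  simp only [Matrix.mul_zero, Matrix.zero_mul, add_zero, zero_add, Matrix.mul_one,
    Matrix.one_mul, Matrix.neg_mul, Matrix.mul_neg, neg_neg, neg_zero] at hJ
  obtain ⟨j11, j12, j21, j22⟩ := fromBlocks_inj.mp hJ
  have hA : A = 0 := eq_zero_of_eq_neg (by rw [← j11])
  have hD : D = 0 := eq_zero_of_eq_neg (by rw [← j22])
  unfold SelfAdjNeg at hsa
  rw [hm, hA, hD] at hsa
  rw [gammaMinus, fromBlocks_transpose, fromBlocks_multiply, fromBlocks_multiply] at hsa
  simp only [Matrix.mul_zero, Matrix.zero_mul, add_zero, zero_add, Matrix.mul_one,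
    Matrix.one_mul, Matrix.mul_smul, Matrix.smul_mul, Matrix.transpose_zero] at hsa
  obtain ⟨s11, s12, s21, s22⟩ := fromBlocks_inj.mp hsa
  -- s21 : C = σ • Bᵀ
  refine ⟨fun i => (1 / 2 : ℝ) * B i (), ?_⟩
  rw [hm, hA, hD, fromBlocks_smul, fromBlocks_inj]
  refine ⟨smul_zero _, ?_, ?_, smul_zero _⟩
  · ext i u
    cases u
    simp [Matrix.replicateCol_apply]
  · rw [s21]
    ext u i
    cases u
    simp only [Matrix.smul_apply, Matrix.replicateRow_apply, Matrix.transpose_apply, smul_eq_mul]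
    ring

lemma exp_selfadj_comm (hσ : 0 < σ) {Z : Matrix (Idx n) (Idx n) ℝ} (hZ : SelfAdjNeg n σ Z) :
    gammaMinus n σ * NormedSpace.exp Z = (NormedSpace.exp Z)ᵀ * gammaMinus n σ := by
  have hσ' : σ ≠ 0 := ne_of_gt hσ
  set U := gmUnit n hσ' with hU
  have hUv : (U : Matrix (Idx n) (Idx n) ℝ) = gammaMinus n σ := rfl
  have hUi : ((U⁻¹ : (Matrix (Idx n) (Idx n) ℝ)ˣ) : Matrix (Idx n) (Idx n) ℝ)
      = gammaMinus n σ⁻¹ := rfl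
  have hγγi : gammaMinus n σ * gammaMinus n σ⁻¹ = 1 := by
    rw [gm_mul, mul_inv_cancel₀ hσ', gm_one]
  have hγiγ : gammaMinus n σ⁻¹ * gammaMinus n σ = 1 := by
    rw [gm_mul, inv_mul_cancel₀ hσ', gm_one]
  have hc : gammaMinus n σ * Z * gammaMinus n σ⁻¹ = Zᵀ := by
    rw [hZ, mul_assoc, hγγi, mul_one]
  have key := Matrix.exp_units_conj U Z
  rw [hUv, hUi, hc] at key
  have := congrArg (fun X => X * gammaMinus n σ) key
  rw [mul_assoc (gammaMinus n σ * NormedSpace.exp Z), hγiγ, mul_one,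
    Matrix.exp_transpose] at this
  exact this.symm

lemma exp_anti_comm (hσ : 0 < σ) {Z : Matrix (Idx n) (Idx n) ℝ}
    (hanti : gammaPlus n σ * Z = -(Zᵀ * gammaPlus n σ)) :
    NormedSpace.exp (-(Zᵀ)) * gammaPlus n σ = gammaPlus n σ * NormedSpace.exp Z := by
  have hσ' : σ ≠ 0 := ne_of_gt hσ
  set U := gpUnit n hσ' with hU
  have hUv : (U : Matrix (Idx n) (Idx n) ℝ) = gammaPlus n σ := rfl
  have hUi : ((U⁻¹ : (Matrix (Idx n) (Idx n) ℝ)ˣ) : Matrix (Idx n) (Idx n) ℝ)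
      = gammaPlus n σ⁻¹ := rfl
  have hγγi : gammaPlus n σ * gammaPlus n σ⁻¹ = 1 := by
    rw [gp_mul, mul_inv_cancel₀ hσ', gm_one]
  have hγiγ : gammaPlus n σ⁻¹ * gammaPlus n σ = 1 := by
    rw [gp_mul, inv_mul_cancel₀ hσ', gm_one]
  have hc : gammaPlus n σ * Z * gammaPlus n σ⁻¹ = -(Zᵀ) := by
    rw [hanti, neg_mul, mul_assoc, hγγi, mul_one]
  have key := Matrix.exp_units_conj U Z
  rw [hUv, hUi, hc] at key
  have := congrArg (fun X => X * gammaPlus n σ) key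
  rwa [mul_assoc (gammaPlus n σ * NormedSpace.exp Z), hγiγ, mul_one] at this

lemma dot_conjT {m : Type*} [Fintype m] [DecidableEq m] (Bm Q : Matrix m m ℝ) (x : m → ℝ) :
    x ⬝ᵥ ((Bmᵀ * Q * Bm) *ᵥ x) = (Bm *ᵥ x) ⬝ᵥ (Q *ᵥ (Bm *ᵥ x)) := by
  rw [mul_assoc, ← Matrix.mulVec_mulVec, Matrix.dotProduct_mulVec, Matrix.vecMul_transpose,
    ← Matrix.mulVec_mulVec]

lemma gm_posdef (hσ : 0 < σ) {y : Idx n → ℝ} (hy : y ≠ 0) :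
    0 < y ⬝ᵥ (gammaMinus n σ *ᵥ y) := by
  have h1 : gammaMinus n σ
      = gammaMinus n (Real.sqrt σ) * 1 * gammaMinus n (Real.sqrt σ) := by
    rw [mul_one, hss hσ]
  rw [h1, dot_conj _ _ (gm_transpose n _) y, Matrix.one_mulVec]
  exact dotProduct_self_pos (mulVec_ne_zero _ _ (hgig hσ) hy)

end Stmt14Aux


open Stmt14Aux in
theorem stmt14 (n : ℕ) (hn : 1 ≤ n) (σ : ℝ) (hσ : 0 < σ)
    (a : (Matrix (Idx n) (Idx n) ℝ)ˣ) (l : ℝ) (hl : 0 < l)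
    (ha : (a : Matrix (Idx n) (Idx n) ℝ)ᵀ * gammaPlus n σ *
      (a : Matrix (Idx n) (Idx n) ℝ) = l • gammaPlus n σ)
    (p : Matrix (Idx n) (Idx n) ℝ)
    (hp : p = (1 / l) • ((gammaMinus n σ)⁻¹ *
      (a : Matrix (Idx n) (Idx n) ℝ)ᵀ * gammaMinus n σ *
      (a : Matrix (Idx n) (Idx n) ℝ))) :
    (SelfAdjNeg n σ p ∧ PosDefNeg n σ p ∧
      (∃! L : Matrix (Idx n) (Idx n) ℝ,
        SelfAdjNeg n σ L ∧ NormedSpace.exp L = p)) ∧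
    (∀ L : Matrix (Idx n) (Idx n) ℝ,
      SelfAdjNeg n σ L → NormedSpace.exp L = p →
      ((1 / 2 : ℝ) • L ∈ pSet n σ ∧
        (Real.sqrt l)⁻¹ • ((a : Matrix (Idx n) (Idx n) ℝ) *
          NormedSpace.exp (-((1 / 2 : ℝ) • L))) ∈ Kset n)) := by
  have hσ' : σ ≠ 0 := ne_of_gt hσ
  have hl' : l ≠ 0 := ne_of_gt hl
  have hγγi : gammaMinus n σ * gammaMinus n σ⁻¹ = 1 := by
    rw [gm_mul, mul_inv_cancel₀ hσ', gm_one]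
  have hγiγ : gammaMinus n σ⁻¹ * gammaMinus n σ = 1 := by
    rw [gm_mul, inv_mul_cancel₀ hσ', gm_one]
  -- γ₋ * p = (1/l) • (aᵀ γ₋ a)
  have hγp : gammaMinus n σ * p
      = (1 / l) • ((a : Matrix (Idx n) (Idx n) ℝ)ᵀ * gammaMinus n σ *
          (a : Matrix (Idx n) (Idx n) ℝ)) := by
    rw [hp, mul_smul_comm]
    congr 1
    rw [gm_inv n hσ']
    calc gammaMinus n σ * (gammaMinus n σ⁻¹ * (a : Matrix (Idx n) (Idx n) ℝ)ᵀ *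
          gammaMinus n σ * (a : Matrix (Idx n) (Idx n) ℝ))
        = (gammaMinus n σ * gammaMinus n σ⁻¹) * ((a : Matrix (Idx n) (Idx n) ℝ)ᵀ *
            gammaMinus n σ * (a : Matrix (Idx n) (Idx n) ℝ)) := by noncomm_ring
    _ = (a : Matrix (Idx n) (Idx n) ℝ)ᵀ * gammaMinus n σ * (a : Matrix (Idx n) (Idx n) ℝ) := by
        rw [hγγi, one_mul]
  have hsaP : SelfAdjNeg n σ p := by
    have hTp : ((gammaMinus n σ)⁻¹ * (a : Matrix (Idx n) (Idx n) ℝ)ᵀ * gammaMinus n σ *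
        (a : Matrix (Idx n) (Idx n) ℝ))ᵀ * gammaMinus n σ
        = (a : Matrix (Idx n) (Idx n) ℝ)ᵀ * gammaMinus n σ * (a : Matrix (Idx n) (Idx n) ℝ) := by
      rw [gm_inv n hσ', Matrix.transpose_mul, Matrix.transpose_mul, Matrix.transpose_mul,
        gm_transpose, gm_transpose, Matrix.transpose_transpose]
      calc (a : Matrix (Idx n) (Idx n) ℝ)ᵀ * (gammaMinus n σ *
            ((a : Matrix (Idx n) (Idx n) ℝ) * gammaMinus n σ⁻¹)) * gammaMinus n σ
          = (a : Matrix (Idx n) (Idx n) ℝ)ᵀ * gammaMinus n σ *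
              (a : Matrix (Idx n) (Idx n) ℝ) * (gammaMinus n σ⁻¹ * gammaMinus n σ) := by
            noncomm_ring
      _ = (a : Matrix (Idx n) (Idx n) ℝ)ᵀ * gammaMinus n σ *
            (a : Matrix (Idx n) (Idx n) ℝ) := by rw [hγiγ, mul_one]
    show gammaMinus n σ * p = pᵀ * gammaMinus n σ
    rw [hγp]
    conv_rhs => rw [hp]
    rw [Matrix.transpose_smul, smul_mul_assoc, hTp]
  have hpdP : PosDefNeg n σ p := by
    intro x hx
    rw [hγp, Matrix.smul_mulVec, dotProduct_smul]
    have hax : (a : Matrix (Idx n) (Idx n) ℝ) *ᵥ x ≠ 0 :=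
      mulVec_ne_zero (a : Matrix (Idx n) (Idx n) ℝ) (↑a⁻¹ : Matrix (Idx n) (Idx n) ℝ)
        a.inv_mul hx
    have h2 := gm_posdef (n := n) hσ hax
    have h3 : x ⬝ᵥ (((a : Matrix (Idx n) (Idx n) ℝ)ᵀ * gammaMinus n σ *
        (a : Matrix (Idx n) (Idx n) ℝ)) *ᵥ x)
        = ((a : Matrix (Idx n) (Idx n) ℝ) *ᵥ x) ⬝ᵥ (gammaMinus n σ *ᵥ
            ((a : Matrix (Idx n) (Idx n) ℝ) *ᵥ x)) := dot_conjT _ _ x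
    rw [h3]
    have : (0 : ℝ) < 1 / l := by positivity
    exact smul_pos this h2
  obtain ⟨L0, hL0sa, hL0exp⟩ := exists_selfAdjNeg_log hσ hsaP hpdP
  refine ⟨⟨hsaP, hpdP, ⟨L0, ⟨hL0sa, hL0exp⟩, fun y hy =>
    exp_inj_selfAdjNeg hσ hy.1 hL0sa (by rw [hy.2, hL0exp])⟩⟩, ?_⟩
  intro L hLsa hLexp
  have hLsa' : gammaMinus n σ * L = Lᵀ * gammaMinus n σ := hLsa
  -- p = J a⁻¹ J a
  have hpform : p = Jmat n * ((↑a⁻¹ : Matrix (Idx n) (Idx n) ℝ) *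
      (Jmat n * (a : Matrix (Idx n) (Idx n) ℝ))) := by
    rw [hp]; exact p_eq hσ a hl ha
  have hpJp : p * (Jmat n * (p * Jmat n)) = 1 := by
    rw [hpform]; exact pJpJ a
  have hexpneg : p * NormedSpace.exp (-L) = 1 := by
    rw [← hLexp, ← Matrix.exp_add_of_commute L (-L) (Commute.neg_right (Commute.refl L)),
      add_neg_cancel, NormedSpace.exp_zero]
  have hinv : NormedSpace.exp (-L) = Jmat n * (p * Jmat n) := by
    calc NormedSpace.exp (-L) = 1 * NormedSpace.exp (-L) := (one_mul _).symm
    _ = ((Jmat n * (p * Jmat n)) * p) * NormedSpace.exp (-L) := by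
        rw [mul_eq_one_comm.mp hpJp]
    _ = (Jmat n * (p * Jmat n)) * (p * NormedSpace.exp (-L)) := by rw [mul_assoc]
    _ = Jmat n * (p * Jmat n) := by rw [hexpneg, mul_one]
  have hJLJ : Jmat n * L * Jmat n = -L := by
    have hL2sa : SelfAdjNeg n σ (-(Jmat n * L * Jmat n)) := by
      show gammaMinus n σ * (-(Jmat n * L * Jmat n))
          = (-(Jmat n * L * Jmat n))ᵀ * gammaMinus n σ
      rw [mul_neg, Matrix.transpose_neg, neg_mul]
      congr 1
      rw [Matrix.transpose_mul, Matrix.transpose_mul, Jmat_transpose]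
      calc gammaMinus n σ * (Jmat n * L * Jmat n)
          = (gammaMinus n σ * Jmat n) * (L * Jmat n) := by noncomm_ring
      _ = (Jmat n * gammaMinus n σ) * (L * Jmat n) := by rw [gm_J_comm]
      _ = Jmat n * ((gammaMinus n σ * L) * Jmat n) := by noncomm_ring
      _ = Jmat n * ((Lᵀ * gammaMinus n σ) * Jmat n) := by rw [hLsa']
      _ = Jmat n * (Lᵀ * (gammaMinus n σ * Jmat n)) := by noncomm_ring
      _ = Jmat n * (Lᵀ * (Jmat n * gammaMinus n σ)) := by rw [gm_J_comm]
      _ = Jmat n * (Lᵀ * Jmat n) * gammaMinus n σ := by noncomm_ring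
    have hL2exp : NormedSpace.exp (-(Jmat n * L * Jmat n)) = p := by
      have e : -(Jmat n * L * Jmat n) = Jmat n * (-L) * Jmat n := by
        rw [mul_neg, neg_mul]
      rw [e]
      have hu := Matrix.exp_units_conj (JUnit n) (-L)
      rw [show ((JUnit n : (Matrix (Idx n) (Idx n) ℝ)ˣ) : Matrix (Idx n) (Idx n) ℝ)
            = Jmat n from rfl,
        show (((JUnit n)⁻¹ : (Matrix (Idx n) (Idx n) ℝ)ˣ) : Matrix (Idx n) (Idx n) ℝ)
            = Jmat n from rfl] at hu
      rw [hu, hinv, JJcancel, mul_assoc, J_mul_J, mul_one]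
    have heq := exp_inj_selfAdjNeg hσ hL2sa hLsa (by rw [hL2exp, hLexp])
    exact neg_eq_iff_eq_neg.mp heq
  refine ⟨half_mem_pSet hLsa hJLJ, ?_⟩
  -- part (c)
  set Z : Matrix (Idx n) (Idx n) ℝ := (1 / 2 : ℝ) • L with hZdef
  have hZsa : SelfAdjNeg n σ Z := by
    show gammaMinus n σ * ((1 / 2 : ℝ) • L) = ((1 / 2 : ℝ) • L)ᵀ * gammaMinus n σ
    rw [mul_smul_comm, Matrix.transpose_smul, smul_mul_assoc, hLsa']
  have hZJ : Jmat n * Z * Jmat n = -Z := by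
    show Jmat n * ((1 / 2 : ℝ) • L) * Jmat n = -((1 / 2 : ℝ) • L)
    rw [mul_smul_comm, smul_mul_assoc, hJLJ, smul_neg]
  have hZanti := gp_anti hZsa hZJ
  have hE1 : NormedSpace.exp Z * NormedSpace.exp (-Z) = 1 := by
    rw [← Matrix.exp_add_of_commute Z (-Z) (Commute.neg_right (Commute.refl Z)),
      add_neg_cancel, NormedSpace.exp_zero]
  have hpZ : p = NormedSpace.exp Z * NormedSpace.exp Z := by
    rw [← hLexp, show L = Z + Z from by rw [hZdef]; module,
      Matrix.exp_add_of_commute Z Z (Commute.refl Z)]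
  have hcommm := exp_selfadj_comm hσ hZsa
  have hcommp := exp_anti_comm hσ hZanti
  have hET : (NormedSpace.exp (-Z))ᵀ = NormedSpace.exp (-(Zᵀ)) := by
    rw [← Matrix.exp_transpose, Matrix.transpose_neg]
  have hcc : (Real.sqrt l)⁻¹ * (Real.sqrt l)⁻¹ = 1 / l := by
    rw [← mul_inv, Real.mul_self_sqrt hl.le, one_div]
  set k : Matrix (Idx n) (Idx n) ℝ := (Real.sqrt l)⁻¹ •
    ((a : Matrix (Idx n) (Idx n) ℝ) * NormedSpace.exp (-Z)) with hkdef
  have hkT : kᵀ = (Real.sqrt l)⁻¹ •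
      ((NormedSpace.exp (-Z))ᵀ * (a : Matrix (Idx n) (Idx n) ℝ)ᵀ) := by
    rw [hkdef, Matrix.transpose_smul, Matrix.transpose_mul]
  have hsandwich : ∀ Q : Matrix (Idx n) (Idx n) ℝ,
      kᵀ * Q * k = (1 / l) • ((NormedSpace.exp (-Z))ᵀ *
        ((a : Matrix (Idx n) (Idx n) ℝ)ᵀ * Q * (a : Matrix (Idx n) (Idx n) ℝ)) *
        NormedSpace.exp (-Z)) := by
    intro Q
    rw [hkT, hkdef, smul_mul_assoc, smul_mul_assoc, mul_smul_comm, smul_smul, hcc]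
    congr 1
    noncomm_ring
  apply mem_Kset hσ
  · -- kᵀ γ₋ k = γ₋
    rw [hsandwich (gammaMinus n σ)]
    have haγ : (a : Matrix (Idx n) (Idx n) ℝ)ᵀ * gammaMinus n σ *
        (a : Matrix (Idx n) (Idx n) ℝ) = l • (gammaMinus n σ * p) := by
      rw [hγp, smul_smul, mul_one_div, div_self hl', one_smul]
    rw [haγ, mul_smul_comm, smul_mul_assoc, smul_smul, one_div, inv_mul_cancel₀ hl', one_smul]
    calc (NormedSpace.exp (-Z))ᵀ * (gammaMinus n σ * p) * NormedSpace.exp (-Z)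
        = (NormedSpace.exp (-Z))ᵀ * (gammaMinus n σ *
            (NormedSpace.exp Z * NormedSpace.exp Z)) * NormedSpace.exp (-Z) := by
          rw [← hpZ]
    _ = (NormedSpace.exp (-Z))ᵀ * ((gammaMinus n σ * NormedSpace.exp Z) *
          (NormedSpace.exp Z * NormedSpace.exp (-Z))) := by noncomm_ring
    _ = (NormedSpace.exp (-Z))ᵀ * (((NormedSpace.exp Z)ᵀ * gammaMinus n σ) * 1) := by
          rw [hcommm, hE1]
    _ = ((NormedSpace.exp (-Z))ᵀ * (NormedSpace.exp Z)ᵀ) * gammaMinus n σ := by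
          noncomm_ring
    _ = (NormedSpace.exp Z * NormedSpace.exp (-Z))ᵀ * gammaMinus n σ := by
          rw [← Matrix.transpose_mul]
    _ = gammaMinus n σ := by rw [hE1, Matrix.transpose_one, one_mul]
  · -- kᵀ γ₊ k = γ₊
    rw [hsandwich (gammaPlus n σ), ha, mul_smul_comm, smul_mul_assoc, smul_smul, one_div,
      inv_mul_cancel₀ hl', one_smul]
    calc (NormedSpace.exp (-Z))ᵀ * gammaPlus n σ * NormedSpace.exp (-Z)
        = NormedSpace.exp (-(Zᵀ)) * gammaPlus n σ * NormedSpace.exp (-Z) := by rw [hET]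
    _ = (gammaPlus n σ * NormedSpace.exp Z) * NormedSpace.exp (-Z) := by rw [hcommp]
    _ = gammaPlus n σ * (NormedSpace.exp Z * NormedSpace.exp (-Z)) := by rw [mul_assoc]
    _ = gammaPlus n σ := by rw [hE1, mul_one]
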